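/- Every point of the 9-dimensional linear subspace 𝔸(S,t) = {p₁ = p₂ = p₃ = p₄ = q₁ = q₂ = q₃ = r = u = 0} ⊆ Σ¹⁴_𝔸 is a singular point of Σ¹⁴_𝔸: for every maximal ideal m of R_Σ containing the images of p₁, p₂, p₃, p₄, q₁, q₂, q₃, r, u, the localization of R_Σ at m is not a regular local ring. -/

import Mathlib

/-!
`S_Σ = ℂ[p₁,p₂,p₃,p₄,q₁,q₂,q₃,r,u,s₁₁,s₁₂,s₁₃,s₂₂,s₂₃,s₃₃,t₁,t₂,t₃]` is the polynomial
ring in 18 variables, indexed by `Fin 18` in this order.  Writing `p`, `q`, `t` for the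
corresponding column vectors, `S` for the symmetric matrix with entries `sᵢⱼ`, `A` for the
skew-symmetric matrix attached to `q`, `S†` for the adjugate of `S`,
`(F₁,F₂,F₃)ᵗ = (rI − AS)·A·t` and `F₄ = −(r² + qᵗ·S†·q)`, the ideal `I_Σ` is generated by
the nine polynomials `pᵗ·q`, the three entries of `(rI + AS)·p + p₄·A·t`,
`pᵗ·S·p + p₄·pᵗ·t`, the three entries of `u·p − (F₁,F₂,F₃)ᵗ`, and `u·p₄ − F₄`.
`R_Σ = S_Σ/I_Σ`.
-/

open MvPolynomial Matrix

noncomputable section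

/-- The polynomial ring in the 18 variables
`p₁,p₂,p₃,p₄,q₁,q₂,q₃,r,u,s₁₁,s₁₂,s₁₃,s₂₂,s₂₃,s₃₃,t₁,t₂,t₃` (in this order). -/
abbrev SSigma : Type := MvPolynomial (Fin 18) ℂ

/-- The column vector `p = (p₁,p₂,p₃)ᵗ`. -/
def pVec : Fin 3 → SSigma := ![X 0, X 1, X 2]

/-- The column vector `q = (q₁,q₂,q₃)ᵗ`. -/
def qVec : Fin 3 → SSigma := ![X 4, X 5, X 6]

/-- The column vector `t = (t₁,t₂,t₃)ᵗ`. -/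
def tVec : Fin 3 → SSigma := ![X 15, X 16, X 17]

/-- The symmetric matrix `S` with entries `sᵢⱼ`. -/
def Smat : Matrix (Fin 3) (Fin 3) SSigma :=
  !![X 9, X 10, X 11; X 10, X 12, X 13; X 11, X 13, X 14]

/-- The skew-symmetric matrix `A` associated to `q`. -/
def Amat : Matrix (Fin 3) (Fin 3) SSigma :=
  !![0, -X 6, X 5; X 6, 0, -X 4; -X 5, X 4, 0]

/-- The vector of polynomials `(F₁,F₂,F₃)ᵗ = (rI − AS)·A·t`. -/
def Fvec : Fin 3 → SSigma :=
  ((X 7 : SSigma) • (1 : Matrix (Fin 3) (Fin 3) SSigma) - Amat * Smat) *ᵥ (Amat *ᵥ tVec)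

/-- The polynomial `F₄ = −(r² + qᵗ·S†·q)`, where `S†` is the adjugate of `S`. -/
def F4 : SSigma := -((X 7) ^ 2 + qVec ⬝ᵥ (Smat.adjugate *ᵥ qVec))

/-- The nine generators of the ideal `I_Σ`: `pᵗ·q`; the three entries of
`(rI + AS)·p + p₄·A·t`; `pᵗ·S·p + p₄·pᵗ·t`; the three entries of `u·p − (F₁,F₂,F₃)ᵗ`;
and `u·p₄ − F₄`. -/
def sigmaGens : Fin 9 → SSigma :=
  ![pVec ⬝ᵥ qVec,
    ((((X 7 : SSigma) • (1 : Matrix (Fin 3) (Fin 3) SSigma) + Amat * Smat) *ᵥ pVec) +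
      (X 3 : SSigma) • (Amat *ᵥ tVec)) 0,
    ((((X 7 : SSigma) • (1 : Matrix (Fin 3) (Fin 3) SSigma) + Amat * Smat) *ᵥ pVec) +
      (X 3 : SSigma) • (Amat *ᵥ tVec)) 1,
    ((((X 7 : SSigma) • (1 : Matrix (Fin 3) (Fin 3) SSigma) + Amat * Smat) *ᵥ pVec) +
      (X 3 : SSigma) • (Amat *ᵥ tVec)) 2,
    pVec ⬝ᵥ (Smat *ᵥ pVec) + X 3 * (pVec ⬝ᵥ tVec),
    ((X 8 : SSigma) • pVec - Fvec) 0,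
    ((X 8 : SSigma) • pVec - Fvec) 1,
    ((X 8 : SSigma) • pVec - Fvec) 2,
    X 8 * X 3 - F4]

/-- The ideal `I_Σ ⊆ S_Σ`. -/
def ISigma : Ideal SSigma := Ideal.span (Set.range sigmaGens)

/-- The quotient ring `R_Σ = S_Σ/I_Σ`. -/
abbrev RSigma : Type := SSigma ⧸ ISigma

namespace SigmaAux


lemma card_le_span_card {K M : Type*} [Field K] [AddCommGroup M] [Module K M]
    {ι : Type*} [Fintype ι] (F : ι → M) (hF : LinearIndependent K F)
    (s : Finset M) (hFs : ∀ i, F i ∈ Submodule.span K (s : Set M)) :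
    Fintype.card ι ≤ s.card := by
  classical
  have h1 : LinearIndependent K
      (fun i => (⟨F i, hFs i⟩ : Submodule.span K (s : Set M))) := by
    apply LinearIndependent.of_comp (Submodule.span K (s : Set M)).subtype
    exact hF
  exact h1.fintype_card_le_finrank.trans (finrank_span_finset_le_card s)

/-- Any `N+1` elements of a polynomial ring in `N` variables over `ℂ` are
algebraically dependent. -/
theorem algdep {N : ℕ} (y : Fin (N + 1) → MvPolynomial (Fin N) ℂ) :
    ¬ AlgebraicIndependent ℂ y := by
  classical
  intro hy
  set D : ℕ := Finset.univ.sup (fun i => (y i).totalDegree) with hD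
  set c : ℕ := (N + 1) * D with hc
  set t : ℕ := (c + 1) ^ N with ht
  -- the family of monomials in the `y i`
  set F : (Fin (N + 1) → Fin (t + 1)) → MvPolynomial (Fin N) ℂ :=
    fun α => ∏ i, y i ^ (α i : ℕ) with hF
  have hFlin : LinearIndependent ℂ F := by
    have hinj : Function.Injective (aeval (R := ℂ) y) :=
      algebraicIndependent_iff_injective_aeval.mp hy
    have hmon : LinearIndependent ℂ
        (fun α : Fin (N + 1) → Fin (t + 1) =>
          (monomial (Finsupp.equivFunOnFinite.symm (fun i => (α i : ℕ))) 1 :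
            MvPolynomial (Fin (N + 1)) ℂ)) := by
      have hb := (MvPolynomial.basisMonomials (Fin (N + 1)) ℂ).linearIndependent
      have := hb.comp (fun α : Fin (N + 1) → Fin (t + 1) =>
          Finsupp.equivFunOnFinite.symm (fun i => (α i : ℕ)))
        (by
          intro α β hab
          have : (fun i => (α i : ℕ)) = fun i => (β i : ℕ) := by
            have := congrArg (Finsupp.equivFunOnFinite) hab
            simpa using this
          funext i
          exact Fin.ext (congrFun this i))
      exact this
    have := hmon.map' (aeval (R := ℂ) y).toLinearMap
      (by rw [LinearMap.ker_eq_bot]; exact hinj)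
    convert this using 1
    funext α
    have h0 : (aeval (R := ℂ) y).toLinearMap
        ((monomial (Finsupp.equivFunOnFinite.symm fun i => ((α i : ℕ)))) 1)
        = aeval (R := ℂ) y ((monomial (Finsupp.equivFunOnFinite.symm fun i => ((α i : ℕ)))) 1) := AlgHom.toLinearMap_apply _ _
    rw [hF, Function.comp_apply, h0, aeval_monomial, _root_.map_one, one_mul,
      Finsupp.prod_fintype _ _ (fun i => pow_zero _)]
    simp [Finsupp.equivFunOnFinite]
    all_goals rfl
  -- the spanning monomial set
  set s : Finset (MvPolynomial (Fin N) ℂ) :=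
    (Finset.univ : Finset (Fin N → Fin (c * t + 1))).image
      (fun d => (monomial (Finsupp.equivFunOnFinite.symm (fun i => (d i : ℕ))) 1)) with hs
  have hmem : ∀ p : MvPolynomial (Fin N) ℂ, p.totalDegree ≤ c * t →
      p ∈ Submodule.span ℂ (s : Set (MvPolynomial (Fin N) ℂ)) := by
    intro p hp
    rw [p.as_sum]
    apply Submodule.sum_mem
    intro v hv
    have hsingle : ∀ i, v i ≤ c * t := by
      intro i
      have h1 : v i ≤ v.sum fun _ n => n := by
        by_cases h : i ∈ v.support
        · exact Finset.single_le_sum (f := fun j => v j) (fun _ _ => Nat.zero_le _) h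
        · simp [Finsupp.notMem_support_iff.mp h]
      have h2 : (v.sum fun _ n => n) ≤ p.totalDegree := MvPolynomial.le_totalDegree hv
      omega
    have : (monomial v (coeff v p) : MvPolynomial (Fin N) ℂ)
        = coeff v p • monomial v 1 := by
      rw [smul_monomial, smul_eq_mul, mul_one]
    rw [this]
    apply Submodule.smul_mem
    apply Submodule.subset_span
    simp only [hs, Finset.coe_image, Set.mem_image, Finset.mem_coe, Finset.mem_univ, true_and,
      Finset.coe_univ, Set.image_univ, Set.mem_range]
    refine ⟨fun i => ⟨v i, Nat.lt_succ_of_le (hsingle i)⟩, ?_⟩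
    congr 1
    simpa using Finsupp.equivFunOnFinite_symm_coe v
  have hdeg : ∀ α : Fin (N + 1) → Fin (t + 1), (F α).totalDegree ≤ c * t := by
    intro α
    calc (F α).totalDegree ≤ ∑ i, ((y i) ^ (α i : ℕ)).totalDegree :=
          MvPolynomial.totalDegree_finset_prod _ _
    _ ≤ ∑ i : Fin (N + 1), t * D := by
        apply Finset.sum_le_sum
        intro i _
        calc ((y i) ^ (α i : ℕ)).totalDegree ≤ (α i : ℕ) * (y i).totalDegree :=
              MvPolynomial.totalDegree_pow _ _
        _ ≤ t * D := by
            apply Nat.mul_le_mul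
            · exact Nat.lt_succ_iff.mp (α i).2
            · exact hD ▸ Finset.le_sup (f := fun i => (y i).totalDegree) (Finset.mem_univ i)
    _ = c * t := by simp [hc]; ring
  have hcard := card_le_span_card F hFlin s (fun α => hmem _ (hdeg α))
  have hcard1 : (t + 1) ^ (N + 1) ≤ s.card := by
    calc (t + 1) ^ (N + 1) = Fintype.card (Fin (N + 1) → Fin (t + 1)) := by
          simp [Fintype.card_fun]
    _ ≤ s.card := hcard
  have hcard2 : s.card ≤ (c * t + 1) ^ N := by
    calc s.card ≤ (Finset.univ : Finset (Fin N → Fin (c * t + 1))).card :=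
          Finset.card_image_le
    _ = (c * t + 1) ^ N := by simp [Fintype.card_fun]
  have hnum : (c * t + 1) ^ N < (t + 1) ^ (N + 1) := by
    calc (c * t + 1) ^ N ≤ ((c + 1) * (t + 1)) ^ N := by
          apply Nat.pow_le_pow_left
          nlinarith
    _ = (c + 1) ^ N * (t + 1) ^ N := by rw [mul_pow]
    _ = t * (t + 1) ^ N := by rw [ht]
    _ < (t + 1) * (t + 1) ^ N := by
          have hpos : 0 < (t + 1) ^ N := Nat.pow_pos (by omega)
          exact Nat.mul_lt_mul_of_lt_of_le (by omega) le_rfl hpos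
    _ = (t + 1) ^ (N + 1) := by ring
  omega




variable {B : Type*} [CommRing B] [Algebra ℂ B]

/-- Evaluation of a multivariate polynomial at `Fin.cons x0 xs` factors through
`finSuccEquiv`. -/
lemma aeval_cons_eq {d : ℕ} {A : Type*} [CommRing A] [Algebra ℂ A]
    (x0 : A) (xs : Fin d → A) (G : MvPolynomial (Fin (d + 1)) ℂ) :
    aeval (Fin.cons x0 xs) G =
      Polynomial.eval₂ ((aeval xs : MvPolynomial (Fin d) ℂ →ₐ[ℂ] A) : MvPolynomial (Fin d) ℂ →+* A)
        x0 (finSuccEquiv ℂ d G) := by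
  have h : (Polynomial.eval₂RingHom
        ((aeval xs : MvPolynomial (Fin d) ℂ →ₐ[ℂ] A) : MvPolynomial (Fin d) ℂ →+* A) x0).comp
        ((finSuccEquiv ℂ d : MvPolynomial (Fin (d+1)) ℂ ≃ₐ[ℂ] _) :
          MvPolynomial (Fin (d+1)) ℂ →+* Polynomial (MvPolynomial (Fin d) ℂ))
      = ((aeval (Fin.cons x0 xs) : MvPolynomial (Fin (d+1)) ℂ →ₐ[ℂ] A) :
          MvPolynomial (Fin (d+1)) ℂ →+* A) := by
    apply MvPolynomial.ringHom_ext
    · intro c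
      simp [finSuccEquiv_apply]
    · intro i
      refine Fin.cases ?_ ?_ i
      · simp [finSuccEquiv_X_zero]
      · intro j
        simp [finSuccEquiv_X_succ]
  simpa using (RingHom.congr_fun h G).symm

/-- Key step: adjoining an element killed by `π` but nonzero. -/
lemma indep_cons {D₀ D₁ : Type*} [CommRing D₀] [IsDomain D₀] [Algebra ℂ D₀]
    [CommRing D₁] [Algebra ℂ D₁]
    (π : D₀ →ₐ[ℂ] D₁) {d : ℕ} {z : Fin d → D₀}
    (hz : AlgebraicIndependent ℂ (fun j => π (z j)))
    (f : D₀) (hf0 : f ≠ 0) (hfπ : π f = 0) :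
    AlgebraicIndependent ℂ (Fin.cons f z) := by
  classical
  rw [algebraicIndependent_iff]
  intro G hG
  rw [aeval_cons_eq] at hG
  set φ : MvPolynomial (Fin d) ℂ →+* D₀ :=
    ((aeval z : MvPolynomial (Fin d) ℂ →ₐ[ℂ] D₀) : MvPolynomial (Fin d) ℂ →+* D₀) with hφ
  -- the constant coefficient of anything evaluating to zero is zero
  have hcoeff0 : ∀ P : Polynomial (MvPolynomial (Fin d) ℂ),
      Polynomial.eval₂ φ f P = 0 → P.coeff 0 = 0 := by
    intro P hev
    have h1 : Polynomial.eval₂ ((π : D₀ →+* D₁).comp φ) ((π : D₀ →+* D₁) f) P = 0 := by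
      rw [← Polynomial.hom_eval₂, hev, map_zero]
    rw [show ((π : D₀ →+* D₁) f) = (0 : D₁) from hfπ, Polynomial.eval₂_at_zero] at h1
    have h2 : aeval (fun j => π (z j)) (P.coeff 0) = 0 := by
      calc aeval (fun j => π (z j)) (P.coeff 0)
          = (π.comp (aeval z)) (P.coeff 0) := by rw [MvPolynomial.comp_aeval (f := z) π]
      _ = 0 := h1
    exact hz.eq_zero_of_aeval_eq_zero _ h2
  -- main claim by strong induction on natDegree
  have key : ∀ (k : ℕ) (P : Polynomial (MvPolynomial (Fin d) ℂ)), P.natDegree ≤ k →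
      Polynomial.eval₂ φ f P = 0 → P = 0 := by
    intro k
    induction k with
    | zero =>
      intro P hdeg hev
      rw [Polynomial.eq_C_of_natDegree_le_zero hdeg, hcoeff0 P hev, map_zero]
    | succ k ih =>
      intro P hdeg hev
      have hc0 : P.coeff 0 = 0 := hcoeff0 P hev
      have hPX : Polynomial.X * P.divX = P := by
        have := Polynomial.X_mul_divX_add P
        rw [hc0] at this
        simpa using this
      have hev2 : f * Polynomial.eval₂ φ f P.divX = 0 := by
        have h3 : Polynomial.eval₂ φ f (Polynomial.X * P.divX) = Polynomial.eval₂ φ f P := by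
          rw [hPX]
        rw [Polynomial.eval₂_mul, Polynomial.eval₂_X] at h3
        rw [h3, hev]
      have hdiv : Polynomial.eval₂ φ f P.divX = 0 := by
        rcases mul_eq_zero.mp hev2 with h | h
        · exact absurd h hf0
        · exact h
      have hdegdiv : P.divX.natDegree ≤ k := by
        have := Polynomial.natDegree_divX_eq_natDegree_tsub_one (p := P)
        omega
      have := ih P.divX hdegdiv hdiv
      rw [← hPX, this, mul_zero]
  have hG0 : finSuccEquiv ℂ d G = 0 := key _ _ le_rfl hG
  have : G = 0 := by
    have := congrArg (finSuccEquiv ℂ d).symm hG0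
    simpa using this
  exact this

/-- A strictly increasing chain of primes yields an algebraically independent family
in the quotient by the smallest one. -/
theorem chain_indep : ∀ (d : ℕ) (Q : Fin (d + 1) → Ideal B), (∀ i, (Q i).IsPrime) →
    StrictMono Q →
    ∃ y : Fin d → B, AlgebraicIndependent ℂ (fun j => Ideal.Quotient.mk (Q 0) (y j)) := by
  intro d
  induction d with
  | zero =>
    intro Q hQ _
    haveI := hQ 0
    refine ⟨Fin.elim0, ?_⟩
    rw [show (fun j => Ideal.Quotient.mk (Q 0) (Fin.elim0 j)) = Fin.elim0 by
      funext j; exact j.elim0]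
    haveI : Nontrivial (B ⧸ Q 0) := Ideal.Quotient.nontrivial_iff.mpr (hQ 0).ne_top
    rw [algebraicIndependent_empty_type_iff]
    exact (algebraMap ℂ (B ⧸ Q 0)).injective
  | succ d ih =>
    intro Q hQ hmono
    obtain ⟨y, hy⟩ := ih (fun i => Q i.succ) (fun i => hQ i.succ)
      (fun i j hij => hmono (by simpa using hij))
    have hlt : Q 0 < Q 1 := hmono (by norm_num [Fin.lt_def])
    obtain ⟨f0, hf1, hf0⟩ := SetLike.exists_of_lt hlt
    haveI := hQ 0
    haveI := hQ 1
    have hle : Q 0 ≤ Q 1 := le_of_lt hlt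
    -- the factor map as an algebra hom
    set π : (B ⧸ Q 0) →ₐ[ℂ] (B ⧸ Q 1) :=
      { toRingHom := Ideal.Quotient.factor hle
        commutes' := fun c => by
          show Ideal.Quotient.factor hle (algebraMap ℂ (B ⧸ Q 0) c) = _
          rw [show (algebraMap ℂ (B ⧸ Q 0)) c = Ideal.Quotient.mk (Q 0) (algebraMap ℂ B c)
              from rfl, Ideal.Quotient.factor_mk]
          rfl } with hπ
    have hπmk : ∀ x : B, π (Ideal.Quotient.mk (Q 0) x) = Ideal.Quotient.mk (Q 1) x := by
      intro x
      show Ideal.Quotient.factor hle (Ideal.Quotient.mk (Q 0) x) = _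
      rw [Ideal.Quotient.factor_mk]
    refine ⟨(Fin.cons f0 y : Fin (d + 1) → B), ?_⟩
    have hcons : (fun j : Fin (d + 1) => Ideal.Quotient.mk (Q 0) ((Fin.cons f0 y : Fin (d + 1) → B) j)) =
        Fin.cons (Ideal.Quotient.mk (Q 0) f0) (fun j => Ideal.Quotient.mk (Q 0) (y j)) := by
      funext j
      refine Fin.cases ?_ ?_ j <;> simp
    rw [hcons]
    apply indep_cons π
    · have : (fun j => π (Ideal.Quotient.mk (Q 0) (y j))) =
          (fun j => Ideal.Quotient.mk ((fun i : Fin (d+1) => Q i.succ) 0) (y j)) := by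
        funext j; rw [hπmk]; rfl
      rw [this]
      exact hy
    · rw [Ne, Ideal.Quotient.eq_zero_iff_mem]
      exact hf0
    · rw [hπmk, Ideal.Quotient.eq_zero_iff_mem]
      exact hf1


end SigmaAux

namespace SigmaAux

/-! ### The ideal `J` generated by the nine distinguished variables -/

def Jid : Ideal SSigma :=
  Ideal.span ((fun i : Fin 18 => (X i : SSigma)) '' {i : Fin 18 | (i : ℕ) ≤ 8})

lemma X_mem_J {i : Fin 18} (h : (i : ℕ) ≤ 8) : (X i : SSigma) ∈ Jid :=
  Ideal.subset_span ⟨i, h, rfl⟩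

lemma A_mem (i j : Fin 3) : Amat i j ∈ Jid := by
  fin_cases i <;> fin_cases j <;>
    simp only [Amat, Matrix.cons_val', Matrix.cons_val_zero, Matrix.cons_val_one,
      Matrix.head_cons, Matrix.empty_val', Matrix.cons_val_fin_one, Matrix.head_fin_const,
      Matrix.of_apply, Matrix.cons_val_two, Matrix.tail_cons] <;>
    first
      | exact zero_mem _
      | exact X_mem_J (by decide)
      | exact neg_mem (X_mem_J (by decide))

lemma p_mem (i : Fin 3) : pVec i ∈ Jid := by
  fin_cases i <;>
    simp only [pVec, Matrix.cons_val_zero, Matrix.cons_val_one, Matrix.head_cons,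
      Matrix.cons_val_two, Matrix.tail_cons] <;>
    exact X_mem_J (by decide)

lemma q_mem (i : Fin 3) : qVec i ∈ Jid := by
  fin_cases i <;>
    simp only [qVec, Matrix.cons_val_zero, Matrix.cons_val_one, Matrix.head_cons,
      Matrix.cons_val_two, Matrix.tail_cons] <;>
    exact X_mem_J (by decide)

lemma dot_mem_sq {v w : Fin 3 → SSigma} (hv : ∀ i, v i ∈ Jid) (hw : ∀ i, w i ∈ Jid) :
    v ⬝ᵥ w ∈ Jid ^ 2 := by
  rw [pow_two]
  exact Ideal.sum_mem _ (fun i _ => Ideal.mul_mem_mul (hv i) (hw i))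

lemma mulVec_mem_left {M : Matrix (Fin 3) (Fin 3) SSigma} {w : Fin 3 → SSigma}
    (hM : ∀ i j, M i j ∈ Jid) (i : Fin 3) : (M *ᵥ w) i ∈ Jid := by
  simp only [Matrix.mulVec, dotProduct]
  exact Ideal.sum_mem _ (fun j _ => Ideal.mul_mem_right _ _ (hM i j))

lemma mulVec_mem_right {M : Matrix (Fin 3) (Fin 3) SSigma} {w : Fin 3 → SSigma}
    (hw : ∀ j, w j ∈ Jid) (i : Fin 3) : (M *ᵥ w) i ∈ Jid := by
  simp only [Matrix.mulVec, dotProduct]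
  exact Ideal.sum_mem _ (fun j _ => Ideal.mul_mem_left _ _ (hw j))

lemma mulVec_mem_sq {M : Matrix (Fin 3) (Fin 3) SSigma} {w : Fin 3 → SSigma}
    (hM : ∀ i j, M i j ∈ Jid) (hw : ∀ j, w j ∈ Jid) (i : Fin 3) : (M *ᵥ w) i ∈ Jid ^ 2 := by
  simp only [Matrix.mulVec, dotProduct]
  rw [pow_two]
  exact Ideal.sum_mem _ (fun j _ => Ideal.mul_mem_mul (hM i j) (hw j))

lemma AS_mem (i j : Fin 3) : (Amat * Smat) i j ∈ Jid := by
  rw [Matrix.mul_apply]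
  exact Ideal.sum_mem _ (fun k _ => Ideal.mul_mem_right _ _ (A_mem i k))

lemma smul_one_add_AS_mem (i j : Fin 3) :
    ((X 7 : SSigma) • (1 : Matrix (Fin 3) (Fin 3) SSigma) + Amat * Smat) i j ∈ Jid := by
  rw [Matrix.add_apply, Matrix.smul_apply, smul_eq_mul]
  exact add_mem (Ideal.mul_mem_right _ _ (X_mem_J (by decide))) (AS_mem i j)

lemma smul_one_sub_AS_mem (i j : Fin 3) :
    ((X 7 : SSigma) • (1 : Matrix (Fin 3) (Fin 3) SSigma) - Amat * Smat) i j ∈ Jid := by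
  rw [Matrix.sub_apply, Matrix.smul_apply, smul_eq_mul]
  exact sub_mem (Ideal.mul_mem_right _ _ (X_mem_J (by decide))) (AS_mem i j)

lemma gens_mem (k : Fin 9) : sigmaGens k ∈ Jid ^ 2 := by
  have hX3 : (X 3 : SSigma) ∈ Jid := X_mem_J (by decide)
  have hX7 : (X 7 : SSigma) ∈ Jid := X_mem_J (by decide)
  have hX8 : (X 8 : SSigma) ∈ Jid := X_mem_J (by decide)
  have hAt : ∀ i, (Amat *ᵥ tVec) i ∈ Jid := mulVec_mem_left A_mem
  have hmain : ∀ i : Fin 3,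
      ((((X 7 : SSigma) • (1 : Matrix (Fin 3) (Fin 3) SSigma) + Amat * Smat) *ᵥ pVec) +
        (X 3 : SSigma) • (Amat *ᵥ tVec)) i ∈ Jid ^ 2 := by
    intro i
    rw [Pi.add_apply, Pi.smul_apply, smul_eq_mul]
    refine add_mem (mulVec_mem_sq smul_one_add_AS_mem p_mem i) ?_
    rw [pow_two]
    exact Ideal.mul_mem_mul hX3 (hAt i)
  have hF : ∀ i : Fin 3, ((X 8 : SSigma) • pVec - Fvec) i ∈ Jid ^ 2 := by
    intro i
    rw [Pi.sub_apply, Pi.smul_apply, smul_eq_mul]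
    refine sub_mem ?_ (mulVec_mem_sq smul_one_sub_AS_mem hAt i)
    rw [pow_two]
    exact Ideal.mul_mem_mul hX8 (p_mem i)
  fin_cases k <;>
    simp only [sigmaGens, Matrix.cons_val', Matrix.cons_val_zero, Matrix.cons_val_one,
      Matrix.head_cons, Matrix.cons_val_fin_one, Matrix.empty_val', Matrix.cons_val_succ,
      Fin.mk_one, Fin.mk_zero, Matrix.of_apply]
  · exact dot_mem_sq p_mem q_mem
  · exact hmain 0
  · exact hmain 1
  · exact hmain 2
  · refine add_mem (dot_mem_sq p_mem (mulVec_mem_right p_mem)) ?_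
    rw [pow_two]
    refine Ideal.mul_mem_mul hX3 ?_
    simp only [dotProduct]
    exact Ideal.sum_mem _ (fun i _ => Ideal.mul_mem_right _ _ (p_mem i))
  · exact hF 0
  · exact hF 1
  · exact hF 2
  · unfold F4
    refine sub_mem ?_ (neg_mem (add_mem ?_ ?_))
    · rw [pow_two]; exact Ideal.mul_mem_mul hX8 hX3
    · simp only [pow_two]; exact Ideal.mul_mem_mul hX7 hX7
    · exact dot_mem_sq q_mem (mulVec_mem_right q_mem)

lemma gen0_ne_zero : sigmaGens 0 ≠ 0 := by
  intro h
  have h2 := congrArg (eval (fun _ : Fin 18 => (1 : ℂ))) h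
  simp only [sigmaGens, Matrix.cons_val_zero, dotProduct, Fin.sum_univ_three,
    pVec, qVec, Matrix.cons_val_one, Matrix.head_cons, Matrix.cons_val_two, Matrix.tail_cons,
    map_add, _root_.map_mul, eval_X, map_zero] at h2
  norm_num at h2

end SigmaAux

namespace SigmaAux

section Deriv

open TrivSqZeroExt

lemma aeval_eq_eval' (a : Fin 18 → ℂ) (g : SSigma) : aeval a g = eval a g :=
  DFunLike.congr_fun (MvPolynomial.coe_aeval_eq_eval a) g

/-- Point plus tangent vector, as a tuple of dual numbers. -/
def wfun (a v : Fin 18 → ℂ) : Fin 18 → DualNumber ℂ := fun i => inl (a i) + inr (v i)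

lemma fst_aeval_w (a v : Fin 18 → ℂ) (g : SSigma) :
    (aeval (wfun a v) g).fst = eval a g := by
  have h : (TrivSqZeroExt.fstHom ℂ ℂ ℂ).comp
        (aeval (wfun a v) : SSigma →ₐ[ℂ] DualNumber ℂ) = aeval a := by
    apply MvPolynomial.algHom_ext
    intro i
    simp [wfun]
  have h2 := AlgHom.congr_fun h g
  simp only [AlgHom.coe_comp, Function.comp_apply] at h2
  rw [← aeval_eq_eval', ← h2]
  rfl

lemma snd_aeval_w (a v : Fin 18 → ℂ) (g : SSigma) :
    (aeval (wfun a v) g).snd = ∑ i, v i * eval a (pderiv i g) := by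
  induction g using MvPolynomial.induction_on with
  | C c => simp [pderiv_C, TrivSqZeroExt.algebraMap_eq_inl']
  | add p q hp hq =>
      simp only [map_add, snd_add, hp, hq, ← Finset.sum_add_distrib]
      congr 1
      funext k
      ring
  | mul_X p i hp =>
      have hw_snd : (wfun a v i).snd = v i := by simp [wfun]
      have hw_fst : (wfun a v i).fst = a i := by simp [wfun]
      rw [_root_.map_mul, TrivSqZeroExt.snd_mul, aeval_X, fst_aeval_w, hp, hw_snd, hw_fst]
      have hR : ∀ k : Fin 18, v k * eval a (pderiv k (p * X i))
          = a i * (v k * eval a (pderiv k p)) + (if i = k then v k * eval a p else 0) := by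
        intro k
        rw [pderiv_mul]
        by_cases hki : k = i
        · subst hki
          simp only [pderiv_X_self, map_add, _root_.map_mul, eval_X, eq_self_iff_true, if_true,
            mul_one]
          ring
        · rw [pderiv_X_of_ne (fun h => hki (Eq.symm h))]
          simp only [map_add, _root_.map_mul, map_zero, mul_zero, eval_X,
            if_neg (fun h : i = k => hki (Eq.symm h))]
          ring
      rw [Finset.sum_congr rfl (fun k _ => hR k), Finset.sum_add_distrib,
        Finset.sum_ite_eq Finset.univ i (fun k => v k * eval a p), if_pos (Finset.mem_univ i)]
      simp only [smul_eq_mul, MulOpposite.smul_eq_mul_unop, MulOpposite.unop_op]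
      rw [Finset.sum_mul]
      have hcomm : ∀ k : Fin 18, (v k * eval a (pderiv k p)) * a i
          = a i * (v k * eval a (pderiv k p)) := fun k => by ring
      rw [Finset.sum_congr rfl fun k _ => hcomm k]
      ring

end Deriv

end SigmaAux

namespace SigmaAux

open TrivSqZeroExt

lemma map_J_le (a v : Fin 18 → ℂ) (ha : ∀ i : Fin 18, (i : ℕ) ≤ 8 → a i = 0) :
    Ideal.map ((aeval (wfun a v) : SSigma →ₐ[ℂ] DualNumber ℂ) :
        SSigma →+* DualNumber ℂ) Jid
      ≤ Ideal.span {(DualNumber.eps : DualNumber ℂ)} := by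
  rw [Jid, Ideal.map_span, Ideal.span_le]
  rintro _ ⟨_, ⟨i, hi, rfl⟩, rfl⟩
  rw [SetLike.mem_coe]
  show (aeval (wfun a v)) (X i) ∈ _
  rw [aeval_X, Ideal.mem_span_singleton]
  refine ⟨inl (v i), ?_⟩
  apply TrivSqZeroExt.ext
  · rw [TrivSqZeroExt.fst_mul, DualNumber.fst_eps, zero_mul]
    simp only [wfun, fst_add, fst_inl, fst_inr, ha i hi, add_zero]
  · rw [TrivSqZeroExt.snd_mul, DualNumber.fst_eps, DualNumber.snd_eps, TrivSqZeroExt.fst_inl,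
      TrivSqZeroExt.snd_inl]
    simp only [wfun, snd_add, snd_inl, snd_inr, zero_add, smul_zero,
      MulOpposite.smul_eq_mul_unop, MulOpposite.unop_op, one_mul, zero_add]

lemma aeval_w_sq_zero {a v : Fin 18 → ℂ} (ha : ∀ i : Fin 18, (i : ℕ) ≤ 8 → a i = 0)
    {z : SSigma} (hz : z ∈ Jid ^ 2) : aeval (wfun a v) z = 0 := by
  have h1 : aeval (wfun a v) z ∈
      Ideal.map ((aeval (wfun a v) : SSigma →ₐ[ℂ] DualNumber ℂ) : SSigma →+* DualNumber ℂ)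
        (Jid ^ 2) := Ideal.mem_map_of_mem _ hz
  rw [Ideal.map_pow] at h1
  have h2 : (Ideal.map ((aeval (wfun a v) : SSigma →ₐ[ℂ] DualNumber ℂ) :
      SSigma →+* DualNumber ℂ) Jid) ^ 2 ≤ Ideal.span {(DualNumber.eps : DualNumber ℂ)} ^ 2 := by
    rw [pow_two, pow_two]
    exact Ideal.mul_mono (map_J_le a v ha) (map_J_le a v ha)
  have h3 : Ideal.span {(DualNumber.eps : DualNumber ℂ)} ^ 2 = ⊥ := by
    rw [Ideal.span_singleton_pow]
    rw [Ideal.span_eq_bot]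
    intro x hx
    rw [Set.mem_singleton_iff] at hx
    rw [hx, pow_two, DualNumber.eps_mul_eps]
  have h4 := h2 h1
  rw [h3] at h4
  exact (Submodule.mem_bot _).mp h4

lemma aeval_w_ISigma {a v : Fin 18 → ℂ} (ha : ∀ i : Fin 18, (i : ℕ) ≤ 8 → a i = 0)
    {z : SSigma} (hz : z ∈ ISigma) : aeval (wfun a v) z = 0 := by
  have hIJ : ISigma ≤ Jid ^ 2 := by
    rw [ISigma, Ideal.span_le]
    rintro _ ⟨k, rfl⟩
    exact gens_mem k
  exact aeval_w_sq_zero ha (hIJ hz)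

end SigmaAux


open SigmaAux TrivSqZeroExt

/-- Every point of the 9-dimensional linear subspace
`𝔸(S,t) = {p₁ = ⋯ = p₄ = q₁ = q₂ = q₃ = r = u = 0} ⊆ Σ¹⁴_𝔸` is a singular point of
`Σ¹⁴_𝔸`: for every maximal ideal `m` of `R_Σ` containing the images of
`p₁, p₂, p₃, p₄, q₁, q₂, q₃, r, u` (the variables of index `≤ 8`), the localization of
`R_Σ` at `m` is not a regular local ring, i.e. its maximal ideal cannot be generated by
Krull-dimension many elements. -/
theorem sigma_singular_along_ASt (m : Ideal RSigma) [hp : m.IsPrime] (hm : m.IsMaximal)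
    (hmem : ∀ i : Fin 18, (i : ℕ) ≤ 8 → Ideal.Quotient.mk ISigma (X i) ∈ m) :
    ¬ ∃ (n : ℕ) (f : Fin n → Localization.AtPrime m),
        Ideal.span (Set.range f) = IsLocalRing.maximalIdeal (Localization.AtPrime m) ∧
          (n : WithBot (WithTop ℕ)) = ringKrullDim (Localization.AtPrime m) := by
  classical
  rintro ⟨n, f, hspan, hdim⟩
  have hmk : Function.Surjective (Ideal.Quotient.mk ISigma) := Ideal.Quotient.mk_surjective
  set m' : Ideal SSigma := m.comap (Ideal.Quotient.mk ISigma) with hm'def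
  haveI hm'max : m'.IsMaximal := Ideal.comap_isMaximal_of_surjective _ hmk
  obtain ⟨a, ham'⟩ := (MvPolynomial.isMaximal_iff_eq_vanishingIdeal_singleton (I := m')).mp hm'max
  have hm'mem : ∀ g : SSigma, g ∈ m' ↔ eval a g = 0 := by
    intro g
    rw [ham', MvPolynomial.mem_vanishingIdeal_singleton_iff, aeval_eq_eval']
  have ha0 : ∀ i : Fin 18, (i : ℕ) ≤ 8 → a i = 0 := by
    intro i hi
    have h1 : (X i : SSigma) ∈ m' := Ideal.mem_comap.mpr (hmem i hi)
    simpa using (hm'mem _).mp h1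
  -- Step B : 18 ≤ n, via dual numbers
  have hkill : ∀ (v : Fin 18 → ℂ), ∀ z ∈ ISigma,
      ((aeval (wfun a v) : SSigma →ₐ[ℂ] DualNumber ℂ) : SSigma →+* DualNumber ℂ) z = 0 :=
    fun v z hz => aeval_w_ISigma ha0 hz
  set φb : (Fin 18 → ℂ) → (RSigma →+* DualNumber ℂ) :=
    fun v => Ideal.Quotient.lift ISigma _ (hkill v) with hφbdef
  have hφb_mk : ∀ (v : Fin 18 → ℂ) (z : SSigma),
      φb v (Ideal.Quotient.mk ISigma z) = aeval (wfun a v) z := by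
    intro v z
    rw [hφbdef]
    exact Ideal.Quotient.lift_mk _ _ _
  have hunit : ∀ (v : Fin 18 → ℂ) (y : m.primeCompl), IsUnit (φb v y) := by
    intro v y
    obtain ⟨s, hs⟩ := hmk (y : RSigma)
    have hsm : s ∉ m' := by
      rw [hm'def, Ideal.mem_comap, hs]
      exact y.2
    have hev : eval a s ≠ 0 := fun h => hsm ((hm'mem s).mpr h)
    rw [← hs, hφb_mk, TrivSqZeroExt.isUnit_iff_isUnit_fst, fst_aeval_w]
    exact isUnit_iff_ne_zero.mpr hev
  set ψ : (Fin 18 → ℂ) → (Localization.AtPrime m →+* DualNumber ℂ) :=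
    fun v => IsLocalization.lift (M := m.primeCompl) (hunit v) with hψdef
  have hψ_alg : ∀ (v : Fin 18 → ℂ) (x : RSigma),
      ψ v (algebraMap RSigma (Localization.AtPrime m) x) = φb v x :=
    fun v x => IsLocalization.lift_eq (hunit v) x
  have hfj : ∀ j, ∃ (x : RSigma) (s : m.primeCompl),
      f j * algebraMap RSigma (Localization.AtPrime m) s
        = algebraMap RSigma (Localization.AtPrime m) x := fun j => by
    obtain ⟨⟨x, s⟩, h⟩ := IsLocalization.surj (M := m.primeCompl) (f j)
    exact ⟨x, s, h⟩
  choose xj sj hxs using hfj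
  choose yj hyj using fun j => hmk (xj j)
  have hxm : ∀ j, xj j ∈ m := by
    intro j
    have h1 : f j ∈ IsLocalRing.maximalIdeal (Localization.AtPrime m) := by
      rw [← hspan]; exact Ideal.subset_span ⟨j, rfl⟩
    have h2 : algebraMap RSigma (Localization.AtPrime m) (xj j)
        ∈ IsLocalRing.maximalIdeal (Localization.AtPrime m) := by
      rw [← hxs j]; exact Ideal.mul_mem_right _ _ h1
    have h3 := Localization.AtPrime.comap_maximalIdeal (I := m)
    rw [← h3]
    exact Ideal.mem_comap.mpr h2
  have hym' : ∀ j, eval a (yj j) = 0 := by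
    intro j
    apply (hm'mem _).mp
    rw [hm'def, Ideal.mem_comap, hyj j]
    exact hxm j
  set T : (Fin 18 → ℂ) →ₗ[ℂ] (Fin n → ℂ) :=
    (Matrix.of fun j i => eval a (pderiv i (yj j))).mulVecLin with hTdef
  have hTzero : ∀ v : Fin 18 → ℂ, T v = 0 → v = 0 := by
    intro v hv
    have hψf : ∀ j, ψ v (f j) = 0 := by
      intro j
      have h1 : φb v (xj j) = 0 := by
        rw [← hyj j, hφb_mk]
        apply TrivSqZeroExt.ext
        · rw [fst_aeval_w, hym' j, TrivSqZeroExt.fst_zero]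
        · rw [snd_aeval_w, TrivSqZeroExt.snd_zero]
          have h6 := congrFun hv j
          simpa [hTdef, Matrix.mulVecLin_apply, Matrix.mulVec, dotProduct,
            mul_comm] using h6
      have h2 : ψ v (f j) * φb v (sj j) = 0 := by
        rw [← hψ_alg v (sj j), ← _root_.map_mul, hxs j, hψ_alg, h1]
      exact ((hunit v (sj j)).mul_left_eq_zero).mp h2
    funext i
    have hXi : (X i - C (a i) : SSigma) ∈ m' := (hm'mem _).mpr (by simp)
    have hXim : Ideal.Quotient.mk ISigma (X i - C (a i)) ∈ m := Ideal.mem_comap.mp hXi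
    have hXiL : algebraMap RSigma (Localization.AtPrime m)
        (Ideal.Quotient.mk ISigma (X i - C (a i)))
        ∈ IsLocalRing.maximalIdeal (Localization.AtPrime m) := by
      rw [← Localization.AtPrime.map_eq_maximalIdeal]
      exact Ideal.mem_map_of_mem _ hXim
    rw [← hspan] at hXiL
    obtain ⟨c, hc⟩ := Ideal.mem_span_range_iff_exists_fun.mp hXiL
    have h4 : ψ v (algebraMap RSigma (Localization.AtPrime m)
        (Ideal.Quotient.mk ISigma (X i - C (a i)))) = 0 := by
      calc ψ v (algebraMap RSigma (Localization.AtPrime m)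
            (Ideal.Quotient.mk ISigma (X i - C (a i))))
          = ψ v (∑ j, c j * f j) := by rw [hc]
        _ = ∑ j, ψ v (c j * f j) := map_sum (ψ v) _ Finset.univ
        _ = 0 := Finset.sum_eq_zero fun j _ => by rw [_root_.map_mul, hψf j, mul_zero]
    rw [hψ_alg, hφb_mk] at h4
    have h5 := congrArg TrivSqZeroExt.snd h4
    rw [snd_aeval_w, TrivSqZeroExt.snd_zero] at h5
    have h7 : ∀ k : Fin 18, v k * eval a (pderiv k (X i - C (a i)))
        = if k = i then v k else 0 := by
      intro k
      rw [map_sub, pderiv_C, sub_zero, pderiv_X]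
      by_cases hki : k = i
      · subst hki; simp
      · simp [Pi.single_apply, hki]
    rw [Finset.sum_congr rfl (fun k _ => h7 k), Finset.sum_ite_eq' Finset.univ i (fun k => v k),
      if_pos (Finset.mem_univ i)] at h5
    exact h5
  have hTinj : Function.Injective T := by
    rw [← LinearMap.ker_eq_bot, Submodule.eq_bot_iff]
    intro v hv
    exact hTzero v (LinearMap.mem_ker.mp hv)
  have h18 : (18 : ℕ) ≤ n := by
    have h1 := LinearMap.finrank_le_finrank_of_injective hTinj
    simpa using h1
  -- Step A : extract a chain of primes
  obtain ⟨pch, hpch⟩ : ∃ p : LTSeries (PrimeSpectrum (Localization.AtPrime m)),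
      18 ≤ p.length := by
    by_contra hco
    push_neg at hco
    have hle : ringKrullDim (Localization.AtPrime m) ≤ ((17 : ℕ) : WithBot (WithTop ℕ)) := by
      refine iSup_le fun p => ?_
      have h1 : p.length ≤ 17 := by have := hco p; omega
      exact Nat.cast_le.mpr h1
    rw [← hdim] at hle
    have h2 : n ≤ 17 := by exact Nat.cast_le.mp hle
    omega
  set ρ : SSigma →+* Localization.AtPrime m :=
    (algebraMap RSigma (Localization.AtPrime m)).comp (Ideal.Quotient.mk ISigma) with hρdef
  have hIker : ∀ z ∈ ISigma, ρ z = 0 := fun z hz => by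
    rw [hρdef, RingHom.comp_apply, Ideal.Quotient.eq_zero_iff_mem.mpr hz, map_zero]
  set g : Fin (pch.length + 1) → Ideal SSigma := fun i => (pch i).asIdeal.comap ρ with hgdef
  set Q : Fin (pch.length + 2) → Ideal SSigma := Fin.cons ⊥ g with hQdef
  have hQ0 : Q 0 = ⊥ := by rw [hQdef]; exact Fin.cons_zero _ _
  have hQsucc : ∀ j : Fin (pch.length + 1), Q j.succ = g j := by
    intro j; rw [hQdef]; exact Fin.cons_succ _ _ _
  have hQprime : ∀ i, (Q i).IsPrime := by
    intro i
    refine Fin.cases ?_ ?_ i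
    · rw [hQ0]; exact Ideal.bot_prime
    · intro j; rw [hQsucc]; exact Ideal.IsPrime.comap ρ
  have hcomap_inj : ∀ P P' : PrimeSpectrum (Localization.AtPrime m),
      P.asIdeal.comap ρ = P'.asIdeal.comap ρ → P = P' := by
    intro P P' h
    rw [hρdef, ← Ideal.comap_comap, ← Ideal.comap_comap] at h
    have h2 := Ideal.comap_injective_of_surjective _ hmk h
    have h3 := (IsLocalization.orderIsoOfPrime m.primeCompl
      (Localization.AtPrime m)).injective
      (a₁ := ⟨P.asIdeal, P.2⟩) (a₂ := ⟨P'.asIdeal, P'.2⟩) (Subtype.ext h2)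
    exact PrimeSpectrum.ext (congrArg Subtype.val h3)
  have hQmono : StrictMono Q := by
    rw [Fin.strictMono_iff_lt_succ]
    intro i
    refine Fin.cases ?_ ?_ i
    · have hc0 : Q (Fin.castSucc 0) = ⊥ := by rw [Fin.castSucc_zero, hQ0]
      rw [hc0, hQsucc 0]
      rw [bot_lt_iff_ne_bot]
      intro hbot
      have hgen : sigmaGens 0 ∈ g 0 := by
        rw [hgdef, Ideal.mem_comap,
          hIker _ (Ideal.subset_span ⟨0, rfl⟩)]
        exact (pch 0).asIdeal.zero_mem
      rw [hbot] at hgen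
      exact gen0_ne_zero ((Submodule.mem_bot _).mp hgen)
    · intro j
      have hc1 : Q (Fin.castSucc j.succ) = g (Fin.castSucc j) := by
        rw [← Fin.succ_castSucc, hQsucc]
      rw [hc1, hQsucc]
      have hstep := pch.step j
      refine lt_of_le_of_ne (Ideal.comap_mono ?_) (fun h => hstep.ne (hcomap_inj _ _ h))
      exact hstep.le
  obtain ⟨y, hy⟩ := chain_indep (pch.length + 1) Q hQprime hQmono
  rw [hQ0] at hy
  have hy2 : AlgebraicIndependent ℂ y :=
    AlgebraicIndependent.of_comp (Ideal.Quotient.mkₐ ℂ (⊥ : Ideal SSigma)) hy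
  have hy3 := hy2.comp (Fin.castLE (show 19 ≤ pch.length + 1 by omega))
    (Fin.castLE_injective _)
  exact algdep (N := 18) _ hy3
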